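/- arXiv:2601.11727 — 7 statements merged into one kernel-verified Lean document; each statement's English description precedes it below -/
import Mathlib

section
/- For all x in [0,1], the binary entropy function h(x) = -x·ln(x) - (1-x)·ln(1-x) (with the convention 0·ln 0 = 0) satisfies h(x) ≤ 2·√(x(1-x)). -/
open MeasureTheory Filter Finset
open scoped ENNReal

/-- `p` is a probability distribution on `Fin d`. -/
def IsProbDist {d : ℕ} (p : Fin d → ℝ) : Prop :=
  (∀ i, 0 ≤ p i) ∧ ∑ i, p i = 1

/-- Base-2 Kullback–Leibler divergence (real-valued version, meaningful when
`supp p ⊆ supp q`), with the convention `0 · log(0/q) = 0`. -/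
noncomputable def klDivReal {d : ℕ} (p q : Fin d → ℝ) : ℝ :=
  ∑ i, if p i = 0 then 0 else p i * Real.logb 2 (p i / q i)

/-- Base-2 Kullback–Leibler divergence, `+∞` when `supp p ⊄ supp q`. -/
noncomputable def klDiv {d : ℕ} (p q : Fin d → ℝ) : EReal :=
  if ∀ i, q i = 0 → p i = 0 then ((klDivReal p q : ℝ) : EReal) else ⊤

/-- Minimal nonzero entry of `p` (junk value `1` if there is none). -/
noncomputable def minPos {d : ℕ} (p : Fin d → ℝ) : ℝ :=
  if h : (Finset.univ.filter fun i => 0 < p i).Nonempty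
  then (Finset.univ.filter fun i => 0 < p i).inf' h p else 1

/-- The continuity modulus `g(p, ε) = 2 log₂(1/p_min) ε + (2√2/ln 2) √ε`. -/
noncomputable def gCont {d : ℕ} (p : Fin d → ℝ) (ε : ℝ) : ℝ :=
  2 * Real.logb 2 (1 / minPos p) * ε + (2 * Real.sqrt 2 / Real.log 2) * Real.sqrt ε

/-- The discrete measure on `Fin d` with mass `p i` at `i`. -/
noncomputable def discMeasure {d : ℕ} (p : Fin d → ℝ) : Measure (Fin d) :=
  Measure.count.withDensity fun i => ENNReal.ofReal (p i)

instance discMeasure.isFiniteMeasure {d : ℕ} (p : Fin d → ℝ) :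
    IsFiniteMeasure (discMeasure p) := by
  constructor
  rw [discMeasure, withDensity_apply _ MeasurableSet.univ,
    MeasureTheory.setLIntegral_univ, MeasureTheory.lintegral_count, tsum_fintype]
  exact ENNReal.sum_lt_top.mpr fun i _ => ENNReal.ofReal_lt_top

/-- The law of `n` i.i.d. samples from `p`. -/
noncomputable def iidMeasure {d : ℕ} (p : Fin d → ℝ) (n : ℕ) :
    Measure (Fin n → Fin d) :=
  Measure.pi fun _ => discMeasure p

/-- The empirical distribution of the sample `x`. -/
noncomputable def empDist {d n : ℕ} (x : Fin n → Fin d) : Fin d → ℝ :=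
  fun i => ((Finset.univ.filter fun j => x j = i).card : ℝ) / n

/-- ℓ¹ distance between two vectors on `Fin d`. -/
noncomputable def l1Dist {d : ℕ} (p q : Fin d → ℝ) : ℝ :=
  ∑ i, |p i - q i|

/-!
Since `sinh u ≤ u` for `u ≤ 0`, taking `u = log √t` gives `-log t ≤ 1/√t - √t` on `(0, 1]`,
that is `-t log t ≤ √t (1 - t) ≤ √(t (1 - t))`. Adding this bound at `t = x` and `t = 1 - x`
gives the theorem.
-/

namespace Real

lemma sub_inv_le_two_mul_log {x : ℝ} (hx₀ : 0 < x) (hx₁ : x ≤ 1) : x - x⁻¹ ≤ 2 * log x := by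
  have h := sinh_le_self_iff.mpr (log_nonpos hx₀.le hx₁)
  rw [sinh_log hx₀] at h
  linarith

lemma neg_mul_log_le_sqrt_mul_one_sub {t : ℝ} (ht₀ : 0 ≤ t) (ht₁ : t ≤ 1) :
    -(t * log t) ≤ √(t * (1 - t)) := by
  rcases ht₀.eq_or_lt with rfl | ht₀
  · simp
  have hs : 0 < √t := sqrt_pos.mpr ht₀
  have hss : √t * √t = t := mul_self_sqrt ht₀.le
  have key := sub_inv_le_two_mul_log hs (sqrt_le_one.mpr ht₁)
  rw [log_sqrt ht₀.le] at key
  calc -(t * log t) ≤ t * ((√t)⁻¹ - √t) := by nlinarith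
    _ = √t * (1 - t) := by nth_rw 1 [← hss]; field_simp; rw [sq, hss]
    _ ≤ √t * √(1 - t) := by gcongr; exact le_sqrt_self_iff.mpr (by linarith)
    _ = √(t * (1 - t)) := (sqrt_mul ht₀.le _).symm

end Real

/-- `Real.log 0 = 0` in Mathlib, which encodes the convention `0 · ln 0 = 0`. -/
theorem binEntropy_le_two_sqrt :
    ∀ x ∈ Set.Icc (0 : ℝ) 1,
      -(x * Real.log x) - (1 - x) * Real.log (1 - x) ≤ 2 * Real.sqrt (x * (1 - x)) := by
  rintro x ⟨hx₀, hx₁⟩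
  have hx := Real.neg_mul_log_le_sqrt_mul_one_sub hx₀ hx₁
  have hy := Real.neg_mul_log_le_sqrt_mul_one_sub (sub_nonneg.mpr hx₁) (by linarith)
  rw [sub_sub_cancel, mul_comm (1 - x) x] at hy
  linarith
end

section
/- Let A, B, C be probability distributions on a finite set [d] with supp(A) ⊆ supp(C) and supp(B) ⊆ supp(C), and suppose ‖A - B‖₁ ≤ ε for some ε ∈ [0,1]. Then |D(A‖C) - D(B‖C)| ≤ 2·log₂(1/c_min)·ε + (2√2/ln 2)·√ε, where c_min is the minimal nonzero probability of C. -/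
open MeasureTheory Filter Finset
open scoped ENNReal

-- one-sided helpers for f(t) = -t log t continuity
lemma keyA (x y : ℝ) (hy0 : 0 ≤ y) (hyx : y ≤ x) (hx1 : x ≤ 1) :
    x * Real.log x - y * Real.log y ≤ x - y := by
  rcases eq_or_lt_of_le hy0 with h0 | h0
  · have hx0 : 0 ≤ x := hy0.trans hyx
    have := Real.mul_log_nonpos hx0 hx1  -- maybe name wrong
    simp [← h0]
    nlinarith [Real.log_nonpos hx0 hx1]
  · have hx0 : 0 < x := h0.trans_le hyx
    have h1 : Real.log x - Real.log y ≤ x / y - 1 := by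
      rw [← Real.log_div (ne_of_gt hx0) (ne_of_gt h0)]
      exact Real.log_le_sub_one_of_pos (div_pos hx0 h0)
    have h2 : Real.log x ≤ 0 := Real.log_nonpos hx0.le hx1
    have h3 : y * (Real.log x - Real.log y) ≤ x - y := by
      calc y * (Real.log x - Real.log y) ≤ y * (x / y - 1) := by
            exact mul_le_mul_of_nonneg_left h1 h0.le
        _ = x - y := by field_simp
    nlinarith

lemma keyB (x y : ℝ) (hy0 : 0 ≤ y) (hyx : y ≤ x) (hx1 : x ≤ 1) :
    y * Real.log y - x * Real.log x ≤ -((x - y) * Real.log (x - y)) := by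
  set δ := x - y with hδ
  have hδ0 : 0 ≤ δ := by linarith
  rcases eq_or_lt_of_le hδ0 with h0 | h0
  · have hxy : x = y := by simp only [hδ] at h0; linarith
    simp [hxy, ← h0]
  rcases eq_or_lt_of_le hy0 with hy | hy
  · simp [← hy] at hδ ⊢
    rw [hδ]
  · have hx0 : 0 < x := hy.trans_le hyx
    have h1 : Real.log y ≤ Real.log x := Real.log_le_log hy hyx
    have h2 : Real.log δ ≤ Real.log x := Real.log_le_log h0 (by linarith)
    have h3 : y * Real.log y ≤ y * Real.log x := mul_le_mul_of_nonneg_left h1 hy.le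
    have h4 : δ * Real.log δ ≤ δ * Real.log x := mul_le_mul_of_nonneg_left h2 hδ0
    have h5 : y * Real.log x + δ * Real.log x = x * Real.log x := by rw [hδ]; ring
    linarith

lemma key1 (x y : ℝ) (hx0 : 0 ≤ x) (hx1 : x ≤ 1) (hy0 : 0 ≤ y) (hy1 : y ≤ 1) :
    |x * Real.log x - y * Real.log y| ≤ |x - y| + -(|x - y| * Real.log |x - y|) := by
  have habs : ∀ a b : ℝ, 0 ≤ a → a ≤ b → b ≤ 1 →
      |b * Real.log b - a * Real.log a| ≤ (b - a) + -((b - a) * Real.log (b - a)) := by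
    intro a b ha hab hb1
    rw [abs_sub_le_iff]
    have hfnn : 0 ≤ -((b - a) * Real.log (b - a)) := by
      have : Real.log (b - a) ≤ 0 := Real.log_nonpos (by linarith) (by linarith)
      nlinarith
    constructor
    · have := keyA b a ha hab hb1
      linarith
    · have := keyB b a ha hab hb1
      linarith
  rcases le_total y x with h | h
  · rw [abs_of_nonneg (by linarith : (0:ℝ) ≤ x - y)]
    exact habs y x hy0 h hx1
  · rw [abs_sub_comm x y, abs_of_nonneg (by linarith : (0:ℝ) ≤ y - x),
      abs_sub_comm (x * Real.log x)]
    exact habs x y hx0 h hy1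

lemma key2 (δ m : ℝ) (hδ : 0 ≤ δ) (hm : 0 < m) :
    -(δ * Real.log δ) ≤ m - δ * Real.log m := by
  rcases eq_or_lt_of_le hδ with h0 | h0
  · simp [← h0]; positivity
  · have h1 : Real.log m - Real.log δ ≤ m / δ - 1 := by
      rw [← Real.log_div (ne_of_gt hm) (ne_of_gt h0)]
      exact Real.log_le_sub_one_of_pos (div_pos hm h0)
    have h3 : δ * (Real.log m - Real.log δ) ≤ m - δ := by
      calc δ * (Real.log m - Real.log δ) ≤ δ * (m / δ - 1) :=
            mul_le_mul_of_nonneg_left h1 h0.le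
        _ = m - δ := by field_simp
    nlinarith

lemma key3 (ε : ℝ) (h0 : 0 < ε) (h1 : ε ≤ 1) :
    2 * ε - ε * Real.log ε ≤ 2 * Real.sqrt 2 * Real.sqrt ε := by
  set u := Real.sqrt ε with hu
  have hu0 : 0 < u := Real.sqrt_pos.mpr h0
  have hu1 : u ≤ 1 := by
    rw [hu, show (1:ℝ) = Real.sqrt 1 by simp]
    exact Real.sqrt_le_sqrt h1
  have hε : ε = u * u := (Real.mul_self_sqrt h0.le).symm
  have hlog : Real.log ε = 2 * Real.log u := by
    rw [hε, Real.log_mul hu0.ne' hu0.ne']; ring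
  have hlu : -Real.log u ≤ 1 / u - 1 := by
    have := Real.log_le_sub_one_of_pos (show (0:ℝ) < 1/u by positivity)
    rw [Real.log_div one_ne_zero hu0.ne', Real.log_one] at this
    linarith
  have hs2 : (1:ℝ) ≤ Real.sqrt 2 := by
    rw [show (1:ℝ) = Real.sqrt 1 by simp]
    exact Real.sqrt_le_sqrt (by norm_num)
  have key : u - u * Real.log u ≤ 1 := by
    have h6 : u * (-Real.log u) ≤ u * (1 / u - 1) := mul_le_mul_of_nonneg_left hlu hu0.le
    have h7 : u * (1 / u - 1) = 1 - u := by field_simp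
    nlinarith
  calc 2 * ε - ε * Real.log ε = 2 * u * (u - u * Real.log u) := by rw [hlog, hε]; ring
    _ ≤ 2 * u * 1 := by nlinarith
    _ ≤ 2 * Real.sqrt 2 * u := by nlinarith

/-- continuity of KL divergence in its first argument. -/
theorem klDiv_continuity {d : ℕ} (A B C : Fin d → ℝ) (ε : ℝ)
    (hA : IsProbDist A) (hB : IsProbDist B) (hC : IsProbDist C)
    (hAC : ∀ i, C i = 0 → A i = 0) (hBC : ∀ i, C i = 0 → B i = 0)
    (hε : ε ∈ Set.Icc (0 : ℝ) 1) (hl1 : l1Dist A B ≤ ε) :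
    |klDivReal A C - klDivReal B C| ≤
      2 * Real.logb 2 (1 / minPos C) * ε + (2 * Real.sqrt 2 / Real.log 2) * Real.sqrt ε := by
  obtain ⟨hA0, hA1⟩ := hA
  obtain ⟨hB0, hB1⟩ := hB
  obtain ⟨hC0, hC1⟩ := hC
  have hL : (0:ℝ) < Real.log 2 := Real.log_pos one_lt_two
  have hkl : ∀ (p : Fin d → ℝ), (∀ i, C i = 0 → p i = 0) →
      klDivReal p C = (∑ i, (p i * Real.log (p i) - p i * Real.log (C i))) / Real.log 2 := by
    intro p hp
    rw [klDivReal, Finset.sum_div]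
    refine Finset.sum_congr rfl fun i _ => ?_
    by_cases h : p i = 0
    · simp [h]
    · have hCi : C i ≠ 0 := fun hc => h (hp i hc)
      rw [if_neg h, Real.logb, Real.log_div h hCi]
      ring
  set S : Finset (Fin d) := Finset.univ.filter fun i => 0 < C i with hS
  have hSmem : ∀ i, i ∈ S ↔ 0 < C i := by intro i; simp [hS]
  have hSne : S.Nonempty := by
    by_contra h
    have hz : ∀ i, C i = 0 := by
      intro i
      rcases eq_or_lt_of_le (hC0 i) with h0 | h0
      · exact h0.symm
      · exact absurd ⟨i, (hSmem i).mpr h0⟩ h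
    simp [hz] at hC1
  set c := minPos C with hc
  have hcdef : c = S.inf' hSne C := by rw [hc, minPos, dif_pos hSne]
  obtain ⟨i₀, hi₀, hci₀⟩ := S.exists_mem_eq_inf' hSne C
  have hcpos : 0 < c := by rw [hcdef, hci₀]; exact (hSmem i₀).mp hi₀
  have hcle : ∀ i ∈ S, c ≤ C i := fun i hi => hcdef ▸ Finset.inf'_le C hi
  have hCle1 : ∀ i, C i ≤ 1 := by
    intro i; rw [← hC1]; exact Finset.single_le_sum (fun j _ => hC0 j) (Finset.mem_univ i)
  have hc1 : c ≤ 1 := by rw [hcdef, hci₀]; exact hCle1 i₀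
  have hsumS : ∑ i ∈ S, C i = 1 := by
    rw [← hC1]
    refine Finset.sum_subset (Finset.subset_univ S) fun i _ hi => ?_
    rcases eq_or_lt_of_le (hC0 i) with h0 | h0
    · exact h0.symm
    · exact absurd ((hSmem i).mpr h0) hi
  have hsc : (S.card : ℝ) * c ≤ 1 := by
    rw [← hsumS]
    calc (S.card : ℝ) * c = ∑ _i ∈ S, c := by rw [Finset.sum_const, nsmul_eq_mul]
      _ ≤ ∑ i ∈ S, C i := Finset.sum_le_sum hcle
  have hs1 : (1:ℝ) ≤ S.card := by exact_mod_cast hSne.card_pos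
  have hAle1 : ∀ i, A i ≤ 1 := by
    intro i; rw [← hA1]; exact Finset.single_le_sum (fun j _ => hA0 j) (Finset.mem_univ i)
  have hBle1 : ∀ i, B i ≤ 1 := by
    intro i; rw [← hB1]; exact Finset.single_le_sum (fun j _ => hB0 j) (Finset.mem_univ i)
  have hδ : ∑ i, |A i - B i| ≤ ε := hl1
  have hlogc : 0 ≤ Real.log (1/c) := Real.log_nonneg (by rw [le_div_iff₀ hcpos]; linarith)
  rw [hkl A hAC, hkl B hBC, div_sub_div_same, abs_div, abs_of_pos hL]
  have hrhs : 2 * Real.logb 2 (1 / minPos C) * ε + (2 * Real.sqrt 2 / Real.log 2) * Real.sqrt ε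
      = (2 * Real.log (1 / c) * ε + 2 * Real.sqrt 2 * Real.sqrt ε) / Real.log 2 := by
    rw [Real.logb, ← hc]
    field_simp
  rw [hrhs]
  gcongr
  rw [← Finset.sum_sub_distrib]
  rcases eq_or_lt_of_le hε.1 with hε0 | hε0
  · -- ε = 0 forces A = B
    have hAB : ∀ i, A i = B i := by
      intro i
      have h2 : |A i - B i| ≤ 0 := by
        have := Finset.single_le_sum (f := fun i => |A i - B i|)
          (fun j _ => abs_nonneg _) (Finset.mem_univ i)
        rw [← hε0] at hδ
        linarith
      have h3 : |A i - B i| = 0 := le_antisymm h2 (abs_nonneg _)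
      have := abs_eq_zero.mp h3
      linarith
    have heq : ∀ i ∈ Finset.univ, (A i * Real.log (A i) - A i * Real.log (C i)) -
        (B i * Real.log (B i) - B i * Real.log (C i)) = 0 := by
      intro i _; rw [hAB i]; ring
    rw [Finset.sum_congr rfl heq]
    simp [← hε0]
  · -- ε > 0
    set m : ℝ := ε / S.card with hm
    have hmpos : 0 < m := by positivity
    have hm1 : m ≤ 1 := by
      rw [hm, div_le_one (by linarith)]
      exact hε.2.trans hs1
    have hlogm : -Real.log m ≤ Real.log (1/c) - Real.log ε := by
      have hsle : (S.card : ℝ) ≤ 1 / c := by rw [le_div_iff₀ hcpos]; exact hsc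
      have h1 : Real.log (S.card) ≤ Real.log (1/c) := Real.log_le_log (by linarith) hsle
      rw [hm, Real.log_div (ne_of_gt hε0) (by positivity)]
      linarith
    set K : ℝ := 1 + 2 * Real.log (1/c) - Real.log ε with hK
    have hKnn : 0 ≤ K := by
      have := Real.log_nonpos hε0.le hε.2
      rw [hK]; linarith
    have hεlog : 0 ≤ -Real.log ε := by
      have := Real.log_nonpos hε0.le hε.2; linarith
    -- per-term bound on S
    have hterm : ∀ i ∈ S, |(A i * Real.log (A i) - A i * Real.log (C i)) -
        (B i * Real.log (B i) - B i * Real.log (C i))| ≤ m + |A i - B i| * K := by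
      intro i hi
      have hCi : 0 < C i := (hSmem i).mp hi
      have h1 : |(A i * Real.log (A i) - A i * Real.log (C i)) -
          (B i * Real.log (B i) - B i * Real.log (C i))|
          ≤ |A i * Real.log (A i) - B i * Real.log (B i)| + |A i - B i| * |Real.log (C i)| := by
        have : (A i * Real.log (A i) - A i * Real.log (C i)) -
            (B i * Real.log (B i) - B i * Real.log (C i))
            = (A i * Real.log (A i) - B i * Real.log (B i)) - (A i - B i) * Real.log (C i) := by
          ring
        rw [this, ← abs_mul]
        exact abs_sub _ _
      have hlC : |Real.log (C i)| ≤ Real.log (1/c) := by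
        rw [abs_of_nonpos (Real.log_nonpos hCi.le (hCle1 i)), one_div, Real.log_inv]
        have := Real.log_le_log hcpos (hcle i hi)
        linarith
      have h2 : |A i * Real.log (A i) - B i * Real.log (B i)|
          ≤ |A i - B i| + -(|A i - B i| * Real.log |A i - B i|) :=
        key1 _ _ (hA0 i) (hAle1 i) (hB0 i) (hBle1 i)
      have h3 : -(|A i - B i| * Real.log |A i - B i|) ≤ m - |A i - B i| * Real.log m :=
        key2 _ _ (abs_nonneg _) hmpos
      have h4 : |A i - B i| * (-Real.log m) ≤ |A i - B i| * (Real.log (1/c) - Real.log ε) :=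
        mul_le_mul_of_nonneg_left hlogm (abs_nonneg _)
      have h5 : |A i - B i| * |Real.log (C i)| ≤ |A i - B i| * Real.log (1/c) :=
        mul_le_mul_of_nonneg_left hlC (abs_nonneg _)
      have hexp : m + |A i - B i| * K = |A i - B i| + (m + |A i - B i| *
          (Real.log (1/c) - Real.log ε)) + |A i - B i| * Real.log (1/c) := by
        rw [hK]; ring
      rw [hexp]
      nlinarith [abs_nonneg (A i - B i)]
    calc |∑ i, ((A i * Real.log (A i) - A i * Real.log (C i)) -
            (B i * Real.log (B i) - B i * Real.log (C i)))|
        ≤ ∑ i, |(A i * Real.log (A i) - A i * Real.log (C i)) -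
            (B i * Real.log (B i) - B i * Real.log (C i))| :=
          Finset.abs_sum_le_sum_abs _ _
      _ = ∑ i ∈ S, |(A i * Real.log (A i) - A i * Real.log (C i)) -
            (B i * Real.log (B i) - B i * Real.log (C i))| := by
          refine (Finset.sum_subset (Finset.subset_univ S) fun i _ hi => ?_).symm
          have hCi : C i = 0 := by
            rcases eq_or_lt_of_le (hC0 i) with h0 | h0
            · exact h0.symm
            · exact absurd ((hSmem i).mpr h0) hi
          have hAi : A i = 0 := hAC i hCi
          have hBi : B i = 0 := hBC i hCi
          simp [hAi, hBi]
      _ ≤ ∑ i ∈ S, (m + |A i - B i| * K) := Finset.sum_le_sum hterm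
      _ = (S.card : ℝ) * m + (∑ i ∈ S, |A i - B i|) * K := by
          rw [Finset.sum_add_distrib, Finset.sum_const, nsmul_eq_mul, ← Finset.sum_mul]
      _ ≤ ε + ε * K := by
          have hcm : (S.card : ℝ) * m = ε := by
            rw [hm]; field_simp
          have hδS : ∑ i ∈ S, |A i - B i| ≤ ε := by
            refine le_trans ?_ hδ
            exact Finset.sum_le_sum_of_subset_of_nonneg (Finset.subset_univ S)
              fun i _ _ => abs_nonneg _
          have := mul_le_mul_of_nonneg_right hδS hKnn
          linarith [hcm.le, hcm.ge]
      _ = (2 * ε - ε * Real.log ε) + 2 * Real.log (1/c) * ε := by rw [hK]; ring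
      _ ≤ 2 * Real.log (1 / c) * ε + 2 * Real.sqrt 2 * Real.sqrt ε := by
          have := key3 ε hε0 hε.2
          linarith
end

section
/- Let P, Q be probability distributions on a finite set [d] and let F, G be distributions supported on supp(Q). If ‖F - P‖₁ ≤ η and supp(P) ⊆ supp(Q), then D(F‖Q) ≥ D(P‖Q) - (2·log₂(1/q_min)·η + (2√2/ln 2)·√η), where q_min is the minimal nonzero probability of Q. -/
open MeasureTheory Filter Finset
open scoped ENNReal

/-!
Work in nats with `φ = negMulLog` and `T = ‖F - P‖₁`. Then
`(D(P‖Q) - D(F‖Q)) ln 2 = ∑ (φ(Fᵢ) - φ(Pᵢ)) + ∑ (Fᵢ - Pᵢ) ln Qᵢ`, and the second sum is at most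
`T ln(1/q_min)`. On `[0, 1]`, `φ(y) - φ(x) ≤ |y - x| + φ(|y - x|)`: for `y ≥ x` this is subadditivity
of `φ`, for `y ≤ x` it is monotonicity of `φ(t) + t`. Jensen for the concave `φ` on `supp Q`, which
has at most `1/q_min` points, gives `∑ φ(|Fᵢ - Pᵢ|) ≤ T ln(1/q_min) + φ(T)`, and `φ(T) ≤ √T`.
Finally `T + √T ≤ 2√2 √η` because `T ≤ 2`.
-/

open Real

lemma negMulLog_le_exp_neg_one {x : ℝ} (hx : 0 ≤ x) : negMulLog x ≤ exp (-1) := by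
  rcases hx.eq_or_lt with rfl | hx
  · simpa using (exp_pos (-1)).le
  simpa [negMulLog, exp_neg, exp_log hx, mul_comm] using mul_exp_neg_le_exp_neg_one (-log x)

lemma negMulLog_le_sqrt {x : ℝ} (hx : 0 ≤ x) : negMulLog x ≤ √x := by
  have he : exp (-1) ≤ 1 / 2 := by
    rw [exp_neg, one_div]
    exact inv_anti₀ two_pos (by linarith [add_one_le_exp 1])
  calc negMulLog x = 2 * √x * negMulLog √x := by
        conv_lhs => rw [← mul_self_sqrt hx]
        rw [negMulLog_mul]; ring
    _ ≤ 2 * √x * (1 / 2) := by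
        gcongr; exact (negMulLog_le_exp_neg_one (sqrt_nonneg x)).trans he
    _ = √x := by ring

lemma negMulLog_add_le {a b : ℝ} (ha : 0 ≤ a) (hb : 0 ≤ b) :
    negMulLog (a + b) ≤ negMulLog a + negMulLog b := by
  have key : ∀ {x y : ℝ}, 0 ≤ x → 0 ≤ y → x * log x ≤ x * log (x + y) := by
    intro x y hx hy
    rcases hx.eq_or_lt with rfl | hx
    · simp
    exact mul_le_mul_of_nonneg_left (log_le_log hx (by linarith)) hx.le
  simp only [negMulLog_eq_neg]
  linarith [key ha hb, add_comm a b ▸ key hb ha]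

lemma negMulLog_sub_negMulLog_le_sub {x y : ℝ} (hy : 0 ≤ y) (hyx : y ≤ x) (hx : x ≤ 1) :
    negMulLog y - negMulLog x ≤ x - y := by
  simp only [negMulLog_eq_neg]
  rcases hy.eq_or_lt with rfl | hy
  · linarith [mul_log_nonpos (hy.trans hyx) hx]
  have hx0 : 0 < x := hy.trans_le hyx
  have hlog : y * (log x - log y) ≤ x - y :=
    calc y * (log x - log y) = y * log (x / y) := by rw [log_div hx0.ne' hy.ne']
      _ ≤ y * (x / y - 1) := by gcongr; exact log_le_sub_one_of_pos (div_pos hx0 hy)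
      _ = x - y := by field_simp
  nlinarith [log_nonpos (hy.le.trans hyx) hx]

lemma negMulLog_sub_negMulLog_le {x y : ℝ} (hx0 : 0 ≤ x) (hx1 : x ≤ 1) (hy : 0 ≤ y) :
    negMulLog y - negMulLog x ≤ |y - x| + negMulLog |y - x| := by
  rcases le_total y x with h | h
  · rw [abs_of_nonpos (sub_nonpos.2 h), neg_sub]
    linarith [negMulLog_sub_negMulLog_le_sub hy h hx1, negMulLog_nonneg (sub_nonneg.2 h) (by linarith)]
  · rw [abs_of_nonneg (sub_nonneg.2 h)]
    have := negMulLog_add_le hx0 (sub_nonneg.2 h)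
    rw [add_sub_cancel] at this
    linarith

lemma sum_negMulLog_le {ι : Type*} (s : Finset ι) (t : ι → ℝ) (ht : ∀ i ∈ s, 0 ≤ t i) :
    ∑ i ∈ s, negMulLog (t i) ≤ (∑ i ∈ s, t i) * log #s + negMulLog (∑ i ∈ s, t i) := by
  rcases s.eq_empty_or_nonempty with rfl | hs
  · simp
  have hn : (0 : ℝ) < #s := by exact_mod_cast hs.card_pos
  have h := concaveOn_negMulLog.le_map_sum (t := s) (w := fun _ => (#s : ℝ)⁻¹) (p := t)
    (fun _ _ => by positivity) (by simp [hn.ne']) ht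
  have hmean : ∑ i ∈ s, (#s : ℝ)⁻¹ • t i = (∑ i ∈ s, t i) * (#s : ℝ)⁻¹ := by
    rw [← smul_sum, smul_eq_mul, mul_comm]
  have hinv : negMulLog (#s : ℝ)⁻¹ = (#s : ℝ)⁻¹ * log #s := by
    rw [negMulLog, log_inv]; ring
  rw [hmean, negMulLog_mul, hinv, ← smul_sum, smul_eq_mul] at h
  have := mul_le_mul_of_nonneg_left h hn.le
  field_simp at this
  linarith

section ProbDist

variable {d : ℕ}

lemma IsProbDist.le_one {p : Fin d → ℝ} (hp : IsProbDist p) (i : Fin d) : p i ≤ 1 :=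
  hp.2 ▸ single_le_sum (fun j _ => hp.1 j) (mem_univ i)

lemma l1Dist_nonneg (p q : Fin d → ℝ) : 0 ≤ l1Dist p q :=
  sum_nonneg fun _ _ => abs_nonneg _

lemma l1Dist_le_two {p q : Fin d → ℝ} (hp : IsProbDist p) (hq : IsProbDist q) :
    l1Dist p q ≤ 2 :=
  calc l1Dist p q ≤ ∑ i, (p i + q i) :=
        sum_le_sum fun i _ => (abs_sub _ _).trans_eq <| by
          rw [abs_of_nonneg (hp.1 i), abs_of_nonneg (hq.1 i)]
    _ = 2 := by rw [sum_add_distrib, hp.2, hq.2]; norm_num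

lemma minPos_pos (p : Fin d → ℝ) : 0 < minPos p := by
  unfold minPos
  split_ifs with h
  · exact (lt_inf'_iff h).2 fun i hi => (mem_filter.1 hi).2
  · exact one_pos

lemma minPos_le {p : Fin d → ℝ} {i : Fin d} (hi : 0 < p i) : minPos p ≤ p i := by
  have h : (univ.filter fun i => 0 < p i).Nonempty := ⟨i, by simpa using hi⟩
  rw [minPos, dif_pos h]
  exact inf'_le _ (by simpa using hi)

lemma log_inv_minPos_nonneg {p : Fin d → ℝ} (hp : IsProbDist p) : 0 ≤ log (1 / minPos p) := by
  refine log_nonneg ((one_le_div (minPos_pos p)).2 ?_)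
  unfold minPos
  split_ifs with h
  · obtain ⟨i, hi⟩ := h
    exact (inf'_le _ hi).trans (hp.le_one i)
  · exact le_rfl

lemma abs_log_le_log_inv_minPos {p : Fin d → ℝ} (hp : IsProbDist p) {i : Fin d} (hi : 0 < p i) :
    |log (p i)| ≤ log (1 / minPos p) := by
  rw [abs_of_nonpos (log_nonpos hi.le (hp.le_one i)), one_div, log_inv, neg_le_neg_iff]
  exact log_le_log (minPos_pos p) (minPos_le hi)

lemma card_support_mul_minPos_le {p : Fin d → ℝ} (hp : IsProbDist p) :
    #(univ.filter fun i => 0 < p i) * minPos p ≤ 1 :=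
  calc #(univ.filter fun i => 0 < p i) * minPos p
      = ∑ i ∈ univ.filter fun i => 0 < p i, minPos p := by rw [sum_const, nsmul_eq_mul]
    _ ≤ ∑ i ∈ univ.filter fun i => 0 < p i, p i :=
        sum_le_sum fun i hi => minPos_le (mem_filter.1 hi).2
    _ ≤ ∑ i, p i := sum_le_sum_of_subset_of_nonneg (subset_univ _) fun i _ _ => hp.1 i
    _ = 1 := hp.2

lemma log_card_support_le {p : Fin d → ℝ} (hp : IsProbDist p) :
    log #(univ.filter fun i => 0 < p i) ≤ log (1 / minPos p) := by
  rcases (#(univ.filter fun i => 0 < p i)).eq_zero_or_pos with h | h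
  · rw [h, Nat.cast_zero, log_zero]
    exact log_inv_minPos_nonneg hp
  · exact log_le_log (by exact_mod_cast h)
      ((le_div_iff₀ (minPos_pos p)).2 (card_support_mul_minPos_le hp))

lemma klDivReal_mul_log_two {p q : Fin d → ℝ} (h : ∀ i, q i = 0 → p i = 0) :
    klDivReal p q * log 2 = -∑ i, (negMulLog (p i) + p i * log (q i)) := by
  rw [klDivReal, sum_mul, ← sum_neg_distrib]
  refine sum_congr rfl fun i _ => ?_
  split_ifs with hp
  · simp [hp]
  · have hq : q i ≠ 0 := fun hq => hp (h i hq)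
    rw [logb, log_div hp hq, negMulLog]
    field_simp
    ring

end ProbDist

section Continuity

variable {d : ℕ} {P Q F : Fin d → ℝ}

lemma sum_sub_mul_log_le (hQ : IsProbDist Q) (hFQ : ∀ i, Q i = 0 → F i = 0)
    (hPQ : ∀ i, Q i = 0 → P i = 0) :
    ∑ i, (F i - P i) * log (Q i) ≤ l1Dist F P * log (1 / minPos Q) := by
  rw [l1Dist, sum_mul]
  refine sum_le_sum fun i _ => ?_
  rcases (hQ.1 i).eq_or_lt with h | h
  · simp [hFQ i h.symm, hPQ i h.symm]
  · calc (F i - P i) * log (Q i) ≤ |F i - P i| * |log (Q i)| :=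
          (le_abs_self _).trans_eq (abs_mul _ _)
      _ ≤ |F i - P i| * log (1 / minPos Q) := by gcongr; exact abs_log_le_log_inv_minPos hQ h

lemma sum_negMulLog_abs_sub_le (hQ : IsProbDist Q) (hFQ : ∀ i, Q i = 0 → F i = 0)
    (hPQ : ∀ i, Q i = 0 → P i = 0) :
    ∑ i, negMulLog |F i - P i| ≤ l1Dist F P * log (1 / minPos Q) + √(l1Dist F P) := by
  set s := univ.filter fun i => 0 < Q i
  have hvanish : ∀ i ∉ s, |F i - P i| = 0 := fun i hi => by
    have hQi : Q i = 0 := le_antisymm (by simpa [s] using hi) (hQ.1 i)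
    simp [hFQ i hQi, hPQ i hQi]
  have hsum : ∀ f : Fin d → ℝ, (∀ i ∉ s, f i = 0) → ∑ i ∈ s, f i = ∑ i, f i :=
    fun f hf => sum_subset (subset_univ s) fun i _ hi => hf i hi
  have h := sum_negMulLog_le s (fun i => |F i - P i|) fun _ _ => abs_nonneg _
  rw [hsum _ fun i hi => by simp [hvanish i hi], hsum _ hvanish] at h
  refine h.trans (add_le_add ?_ (negMulLog_le_sqrt (l1Dist_nonneg F P)))
  exact mul_le_mul_of_nonneg_left (log_card_support_le hQ) (l1Dist_nonneg F P)

lemma sub_klDivReal_mul_log_two_le (hP : IsProbDist P) (hQ : IsProbDist Q) (hF : IsProbDist F)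
    (hFQ : ∀ i, Q i = 0 → F i = 0) (hPQ : ∀ i, Q i = 0 → P i = 0) :
    (klDivReal P Q - klDivReal F Q) * log 2 ≤
      2 * log (1 / minPos Q) * l1Dist F P + l1Dist F P + √(l1Dist F P) := by
  have hentropy : ∑ i, (negMulLog (F i) - negMulLog (P i)) ≤
      l1Dist F P + ∑ i, negMulLog |F i - P i| := by
    rw [l1Dist, ← sum_add_distrib]
    exact sum_le_sum fun i _ => negMulLog_sub_negMulLog_le (hP.1 i) (hP.le_one i) (hF.1 i)
  have hsplit : (klDivReal P Q - klDivReal F Q) * log 2 =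
      ∑ i, (negMulLog (F i) - negMulLog (P i)) + ∑ i, (F i - P i) * log (Q i) := by
    rw [sub_mul, klDivReal_mul_log_two hPQ, klDivReal_mul_log_two hFQ]
    simp only [sum_add_distrib, sum_sub_distrib, sub_mul]
    ring
  linarith [sum_sub_mul_log_le hQ hFQ hPQ, sum_negMulLog_abs_sub_le hQ hFQ hPQ]

end Continuity

lemma add_sqrt_le_two_mul_sqrt_two_mul_sqrt {t η : ℝ} (ht : 0 ≤ t) (ht2 : t ≤ 2) (htη : t ≤ η) :
    t + √t ≤ 2 * √2 * √η := by
  have h2 : 1 ≤ √2 := one_le_sqrt.2 one_le_two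
  have hmul : t ≤ √2 * √t := by
    nlinarith [mul_self_sqrt ht, sqrt_le_sqrt ht2, sqrt_nonneg t]
  nlinarith [sqrt_le_sqrt htη, sqrt_nonneg t]

/-- distributions close to `P` have nearly the same divergence to `Q`. -/
theorem klDiv_lower_semicontinuity_step {d : ℕ} (P Q F : Fin d → ℝ) (η : ℝ)
    (hP : IsProbDist P) (hQ : IsProbDist Q) (hF : IsProbDist F)
    (hFQ : ∀ i, Q i = 0 → F i = 0) (hPQ : ∀ i, Q i = 0 → P i = 0)
    (hl1 : l1Dist F P ≤ η) :
    klDivReal F Q ≥ klDivReal P Q -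
      (2 * Real.logb 2 (1 / minPos Q) * η + (2 * Real.sqrt 2 / Real.log 2) * Real.sqrt η) := by
  set L := log (1 / minPos Q)
  have hlog2 : 0 < log 2 := log_pos one_lt_two
  have hnats : (klDivReal P Q - klDivReal F Q) * log 2 ≤ 2 * L * η + 2 * √2 * √η := by
    have := mul_le_mul_of_nonneg_left hl1 (mul_nonneg two_pos.le (log_inv_minPos_nonneg hQ))
    linarith [sub_klDivReal_mul_log_two_le hP hQ hF hFQ hPQ,
      add_sqrt_le_two_mul_sqrt_two_mul_sqrt (l1Dist_nonneg F P) (l1Dist_le_two hF hP) hl1]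
  have hbits : 2 * logb 2 (1 / minPos Q) * η + 2 * √2 / log 2 * √η =
      (2 * L * η + 2 * √2 * √η) / log 2 := by
    rw [logb]; ring
  rw [ge_iff_le, hbits, sub_le_comm, le_div_iff₀ hlog2]
  exact hnats
end

section
/- Let P, Q be probability distributions on [d] with shared full support, and suppose every coordinate of Q satisfies qᵢ ≥ p_min/2 for some p_min > 0. Then D(P‖Q) ≤ (2/(p_min·ln 2))·‖P - Q‖₁². -/
open MeasureTheory Filter Finset
open scoped ENNReal

/-- reverse-Pinsker type inequality. -/
theorem klDiv_le_of_coord_lower_bound {d : ℕ} (P Q : Fin d → ℝ) (pmin : ℝ)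
    (hP : IsProbDist P) (hQ : IsProbDist Q)
    (hPfull : ∀ i, 0 < P i) (hQfull : ∀ i, 0 < Q i)
    (hpmin : 0 < pmin) (hQlb : ∀ i, pmin / 2 ≤ Q i) :
    klDivReal P Q ≤ (2 / (pmin * Real.log 2)) * (l1Dist P Q) ^ 2 := by
  have hlog2 : 0 < Real.log 2 := Real.log_pos one_lt_two
  set L := l1Dist P Q with hLdef
  have hLnn : 0 ≤ L := Finset.sum_nonneg fun i _ => abs_nonneg _
  -- Step 1: Σ p ln(p/q) ≤ Σ (p-q)²/q
  have h1 : ∑ i, P i * Real.log (P i / Q i) ≤ ∑ i, (P i - Q i) ^ 2 / Q i := by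
    have hpt : ∀ i ∈ Finset.univ, P i * Real.log (P i / Q i) ≤ P i ^ 2 / Q i - P i := by
      intro i _
      have hlb := Real.log_le_sub_one_of_pos (div_pos (hPfull i) (hQfull i))
      have hq := hQfull i
      have hp := hPfull i
      have : P i * Real.log (P i / Q i) ≤ P i * (P i / Q i - 1) :=
        mul_le_mul_of_nonneg_left hlb hp.le
      calc P i * Real.log (P i / Q i) ≤ P i * (P i / Q i - 1) := this
        _ = P i ^ 2 / Q i - P i := by field_simp
    calc ∑ i, P i * Real.log (P i / Q i) ≤ ∑ i, (P i ^ 2 / Q i - P i) :=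
          Finset.sum_le_sum hpt
      _ = ∑ i, ((P i - Q i) ^ 2 / Q i + (P i - Q i)) := by
          refine Finset.sum_congr rfl fun i _ => ?_
          have hq := (hQfull i).ne'
          field_simp
          ring
      _ = ∑ i, (P i - Q i) ^ 2 / Q i + (∑ i, P i - ∑ i, Q i) := by
          rw [Finset.sum_add_distrib, Finset.sum_sub_distrib]
      _ = ∑ i, (P i - Q i) ^ 2 / Q i := by rw [hP.2, hQ.2]; ring
  -- Step 2: (p-q)²/q ≤ (2/pmin)(p-q)², then sum of squares ≤ L²
  have h2 : ∑ i, (P i - Q i) ^ 2 / Q i ≤ (2 / pmin) * L ^ 2 := by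
    have hA : ∑ i, (P i - Q i) ^ 2 / Q i ≤ ∑ i, (2 / pmin) * (P i - Q i) ^ 2 := by
      refine Finset.sum_le_sum fun i _ => ?_
      have hq2 : 0 < pmin / 2 := by positivity
      calc (P i - Q i) ^ 2 / Q i ≤ (P i - Q i) ^ 2 / (pmin / 2) :=
            div_le_div_of_nonneg_left (sq_nonneg _) hq2 (hQlb i)
        _ = (2 / pmin) * (P i - Q i) ^ 2 := by
            field_simp
    have hB : ∑ i, (P i - Q i) ^ 2 ≤ L ^ 2 := by
      have : ∀ i ∈ Finset.univ, (P i - Q i) ^ 2 ≤ |P i - Q i| * L := by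
        intro i _
        have hle : |P i - Q i| ≤ L :=
          Finset.single_le_sum (f := fun j => |P j - Q j|)
            (fun j _ => abs_nonneg _) (Finset.mem_univ i)
        calc (P i - Q i) ^ 2 = |P i - Q i| * |P i - Q i| := by
              rw [← sq_abs]; ring
          _ ≤ |P i - Q i| * L := mul_le_mul_of_nonneg_left hle (abs_nonneg _)
      calc ∑ i, (P i - Q i) ^ 2 ≤ ∑ i, |P i - Q i| * L := Finset.sum_le_sum this
        _ = L * L := by rw [← Finset.sum_mul, hLdef]; simp [l1Dist, mul_comm]
        _ = L ^ 2 := (sq L).symm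
    calc ∑ i, (P i - Q i) ^ 2 / Q i ≤ (2 / pmin) * ∑ i, (P i - Q i) ^ 2 := by
          rw [Finset.mul_sum]; exact hA
      _ ≤ (2 / pmin) * L ^ 2 := by
          exact mul_le_mul_of_nonneg_left hB (by positivity)
  -- Combine
  have hkl : klDivReal P Q = (∑ i, P i * Real.log (P i / Q i)) / Real.log 2 := by
    rw [klDivReal, Finset.sum_div]
    refine Finset.sum_congr rfl fun i _ => ?_
    rw [if_neg (hPfull i).ne', Real.logb, mul_div_assoc]
  rw [hkl]
  have : (2 / (pmin * Real.log 2)) * L ^ 2 = ((2 / pmin) * L ^ 2) / Real.log 2 := by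
    field_simp
  rw [this]
  exact div_le_div_of_nonneg_right (le_trans h1 h2) hlog2.le
end

section
/- For probability distributions P, Q on [d] with supp(P) ∩ supp(Q) ≠ ∅, the minimum over all probability distributions F on [d] of D(F‖P) + D(F‖Q) is attained uniquely at F* given by f*ₖ = √(pₖ·qₖ) / Σᵢ √(pᵢ·qᵢ). -/
open MeasureTheory Filter Finset
open scoped ENNReal

lemma klDivReal_self' {d : ℕ} (p : Fin d → ℝ) : klDivReal p p = 0 := by
  unfold klDivReal
  refine Finset.sum_eq_zero fun i _ => ?_
  by_cases h : p i = 0 <;> simp [h, Real.logb_one]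

lemma klDiv_ne_bot {d : ℕ} (p q : Fin d → ℝ) : klDiv p q ≠ ⊥ := by
  unfold klDiv; split
  · exact EReal.coe_ne_bot _
  · simp

lemma gibbs_aux {d : ℕ} (F G : Fin d → ℝ) (hF : IsProbDist F) (hG : IsProbDist G)
    (hsub : ∀ i, G i = 0 → F i = 0) :
    0 ≤ klDivReal F G ∧ (klDivReal F G = 0 → F = G) := by
  have hl2 : (0:ℝ) < Real.log 2 := Real.log_pos one_lt_two
  set T : Fin d → ℝ := fun i => if F i = 0 then 0 else F i * Real.log (F i / G i) with hT
  have hkl : klDivReal F G = (∑ i, T i) / Real.log 2 := by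
    unfold klDivReal
    rw [Finset.sum_div]
    refine Finset.sum_congr rfl fun i _ => ?_
    by_cases h : F i = 0
    · simp [h, hT]
    · simp only [hT, if_neg h, Real.logb]
      ring
  have hpos : ∀ i, G i ≠ 0 → F i ≠ 0 → 0 < F i ∧ 0 < G i := fun i hg hf =>
    ⟨(hF.1 i).lt_of_ne (Ne.symm hf), (hG.1 i).lt_of_ne (Ne.symm hg)⟩
  have hpt : ∀ i, F i - G i ≤ T i := by
    intro i
    by_cases h : F i = 0
    · simp [hT, h]; linarith [hG.1 i]
    · have hg : G i ≠ 0 := fun e => h (hsub i e)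
      obtain ⟨hFi, hGi⟩ := hpos i hg h
      have hlog : Real.log (G i / F i) ≤ G i / F i - 1 :=
        Real.log_le_sub_one_of_pos (by positivity)
      have e1 : Real.log (F i / G i) = -Real.log (G i / F i) := by
        rw [← Real.log_inv, inv_div]
      have e2 : F i * (G i / F i) = G i := mul_div_cancel₀ _ h
      simp only [hT, if_neg h, e1]
      nlinarith [mul_le_mul_of_nonneg_left hlog hFi.le]
  have hsum0 : (0:ℝ) = ∑ i, (F i - G i) := by
    rw [Finset.sum_sub_distrib, hF.2, hG.2]; ring
  constructor
  · rw [hkl]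
    apply div_nonneg _ hl2.le
    rw [hsum0]
    exact Finset.sum_le_sum fun i _ => hpt i
  · intro h0
    rw [hkl, div_eq_zero_iff] at h0
    have hs : ∑ i, T i = 0 := h0.resolve_right hl2.ne'
    by_contra hne
    obtain ⟨i0, hi0⟩ : ∃ i, F i ≠ G i := by
      by_contra hc; push_neg at hc; exact hne (funext hc)
    have hstrict : F i0 - G i0 < T i0 := by
      by_cases h : F i0 = 0
      · have hg : G i0 ≠ 0 := fun e => hi0 (h.trans e.symm)
        have : 0 < G i0 := (hG.1 i0).lt_of_ne (Ne.symm hg)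
        simp [hT, h]; linarith
      · have hg : G i0 ≠ 0 := fun e => h (hsub i0 e)
        obtain ⟨hFi, hGi⟩ := hpos i0 hg h
        have hne1 : G i0 / F i0 ≠ 1 := fun e => hi0 ((div_eq_one_iff_eq h).mp e).symm
        have hlog : Real.log (G i0 / F i0) < G i0 / F i0 - 1 :=
          Real.log_lt_sub_one_of_pos (by positivity) hne1
        have e1 : Real.log (F i0 / G i0) = -Real.log (G i0 / F i0) := by
          rw [← Real.log_inv, inv_div]
        have e2 : F i0 * (G i0 / F i0) = G i0 := mul_div_cancel₀ _ h
        simp only [hT, if_neg h, e1]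
        nlinarith [mul_lt_mul_of_pos_left hlog hFi]
    have : ∑ i, (F i - G i) < ∑ i, T i :=
      Finset.sum_lt_sum (fun i _ => hpt i) ⟨i0, Finset.mem_univ _, hstrict⟩
    rw [← hsum0, hs] at this
    exact lt_irrefl _ this

lemma key_identity {d : ℕ} (P Q F : Fin d → ℝ)
    (hP : ∀ i, 0 ≤ P i) (hQ : ∀ i, 0 ≤ Q i)
    (hFnn : ∀ i, 0 ≤ F i) (hFsum : ∑ i, F i = 1)
    (hZ : 0 < ∑ i, Real.sqrt (P i * Q i))
    (hFP : ∀ i, P i = 0 → F i = 0) (hFQ : ∀ i, Q i = 0 → F i = 0) :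
    klDivReal F P + klDivReal F Q
      = 2 * klDivReal F (fun k => Real.sqrt (P k * Q k) / ∑ i, Real.sqrt (P i * Q i))
        - 2 * Real.logb 2 (∑ i, Real.sqrt (P i * Q i)) := by
  set Z : ℝ := ∑ i, Real.sqrt (P i * Q i) with hZdef
  set G : Fin d → ℝ := fun k => Real.sqrt (P k * Q k) / Z with hGdef
  have hl2 : (0:ℝ) < Real.log 2 := Real.log_pos one_lt_two
  have hpt : ∀ i, (if F i = 0 then 0 else F i * Real.logb 2 (F i / P i))
      + (if F i = 0 then 0 else F i * Real.logb 2 (F i / Q i))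
      = 2 * (if F i = 0 then 0 else F i * Real.logb 2 (F i / G i))
        - 2 * Real.logb 2 Z * F i := by
    intro i
    by_cases h : F i = 0
    · simp [h]
    · have hPi : 0 < P i := (hP i).lt_of_ne fun e => h (hFP i e.symm)
      have hQi : 0 < Q i := (hQ i).lt_of_ne fun e => h (hFQ i e.symm)
      have hFi : 0 < F i := (hFnn i).lt_of_ne (Ne.symm h)
      have hsq : 0 < Real.sqrt (P i * Q i) := Real.sqrt_pos.mpr (by positivity)
      have hGi : 0 < G i := by simp only [hGdef]; positivity
      simp only [if_neg h, Real.logb]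
      have e1 : Real.log (F i / P i) = Real.log (F i) - Real.log (P i) :=
        Real.log_div h hPi.ne'
      have e2 : Real.log (F i / Q i) = Real.log (F i) - Real.log (Q i) :=
        Real.log_div h hQi.ne'
      have e3 : Real.log (F i / G i) = Real.log (F i) - Real.log (G i) :=
        Real.log_div h hGi.ne'
      have e4 : Real.log (G i) = (Real.log (P i) + Real.log (Q i)) / 2 - Real.log Z := by
        simp only [hGdef]
        rw [Real.log_div hsq.ne' hZ.ne', Real.log_sqrt (by positivity),
          Real.log_mul hPi.ne' hQi.ne']
      rw [e1, e2, e3, e4]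
      field_simp
      ring
  unfold klDivReal
  rw [← Finset.sum_add_distrib]
  calc (∑ i, ((if F i = 0 then 0 else F i * Real.logb 2 (F i / P i))
        + (if F i = 0 then 0 else F i * Real.logb 2 (F i / Q i))))
      = ∑ i, (2 * (if F i = 0 then 0 else F i * Real.logb 2 (F i / G i))
        - 2 * Real.logb 2 Z * F i) := Finset.sum_congr rfl fun i _ => hpt i
    _ = 2 * (∑ i, if F i = 0 then 0 else F i * Real.logb 2 (F i / G i))
        - 2 * Real.logb 2 Z := by
        rw [Finset.sum_sub_distrib, ← Finset.mul_sum, ← Finset.mul_sum, hFsum, mul_one]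

/-- the minimizer of `F ↦ D(F‖P) + D(F‖Q)` is the normalized
geometric mixture `F*ₖ = √(pₖqₖ)/∑ᵢ√(pᵢqᵢ)`, and it is unique. -/
theorem geometric_mixture_minimizes {d : ℕ} (P Q : Fin d → ℝ)
    (hP : IsProbDist P) (hQ : IsProbDist Q)
    (hsupp : ∃ i, P i ≠ 0 ∧ Q i ≠ 0) :
    let Fstar : Fin d → ℝ :=
      fun k => Real.sqrt (P k * Q k) / ∑ i, Real.sqrt (P i * Q i)
    IsProbDist Fstar ∧
    (∀ F : Fin d → ℝ, IsProbDist F →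
      klDiv Fstar P + klDiv Fstar Q ≤ klDiv F P + klDiv F Q) ∧
    (∀ F : Fin d → ℝ, IsProbDist F →
      klDiv F P + klDiv F Q = klDiv Fstar P + klDiv Fstar Q → F = Fstar) := by
  intro Fstar
  obtain ⟨i0, hi0P, hi0Q⟩ := hsupp
  have hZ : 0 < ∑ i, Real.sqrt (P i * Q i) :=
    Finset.sum_pos' (fun i _ => Real.sqrt_nonneg _)
      ⟨i0, Finset.mem_univ _, Real.sqrt_pos.mpr
        (mul_pos ((hP.1 i0).lt_of_ne (Ne.symm hi0P)) ((hQ.1 i0).lt_of_ne (Ne.symm hi0Q)))⟩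
  have hFstarProb : IsProbDist Fstar := by
    refine ⟨fun k => div_nonneg (Real.sqrt_nonneg _) hZ.le, ?_⟩
    show (∑ k, Real.sqrt (P k * Q k) / ∑ i, Real.sqrt (P i * Q i)) = 1
    rw [← Finset.sum_div, div_self hZ.ne']
  have hFsP : ∀ i, P i = 0 → Fstar i = 0 := by
    intro i hi
    show Real.sqrt (P i * Q i) / _ = 0
    rw [hi, zero_mul, Real.sqrt_zero, zero_div]
  have hFsQ : ∀ i, Q i = 0 → Fstar i = 0 := by
    intro i hi
    show Real.sqrt (P i * Q i) / _ = 0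
    rw [hi, mul_zero, Real.sqrt_zero, zero_div]
  have hsubStar : ∀ F : Fin d → ℝ, (∀ i, P i = 0 → F i = 0) → (∀ i, Q i = 0 → F i = 0) →
      ∀ i, Fstar i = 0 → F i = 0 := by
    intro F h1 h2 i hi
    have : Real.sqrt (P i * Q i) = 0 := by
      have := hi
      simp only [Fstar, div_eq_zero_iff] at this
      exact this.resolve_right hZ.ne'
    rcases mul_eq_zero.mp (Real.sqrt_eq_zero'.mp this |>.antisymm
      (mul_nonneg (hP.1 i) (hQ.1 i))) with h | h
    · exact h1 i h
    · exact h2 i h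
  have hkey : ∀ F : Fin d → ℝ, IsProbDist F → (∀ i, P i = 0 → F i = 0) →
      (∀ i, Q i = 0 → F i = 0) →
      klDivReal F P + klDivReal F Q
        = 2 * klDivReal F Fstar - 2 * Real.logb 2 (∑ i, Real.sqrt (P i * Q i)) :=
    fun F hF h1 h2 => key_identity P Q F hP.1 hQ.1 hF.1 hF.2 hZ h1 h2
  have hstarval : klDivReal Fstar P + klDivReal Fstar Q
      = 2 * klDivReal Fstar Fstar - 2 * Real.logb 2 (∑ i, Real.sqrt (P i * Q i)) :=
    hkey Fstar hFstarProb hFsP hFsQ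
  have hkP : klDiv Fstar P = ((klDivReal Fstar P : ℝ) : EReal) := if_pos hFsP
  have hkQ : klDiv Fstar Q = ((klDivReal Fstar Q : ℝ) : EReal) := if_pos hFsQ
  refine ⟨hFstarProb, ?_, ?_⟩
  · intro F hF
    by_cases hFP' : ∀ i, P i = 0 → F i = 0
    · by_cases hFQ' : ∀ i, Q i = 0 → F i = 0
      · rw [hkP, hkQ, show klDiv F P = ((klDivReal F P : ℝ) : EReal) from if_pos hFP',
          show klDiv F Q = ((klDivReal F Q : ℝ) : EReal) from if_pos hFQ',
          ← EReal.coe_add, ← EReal.coe_add, EReal.coe_le_coe_iff]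
        rw [hkey F hF hFP' hFQ', hstarval, klDivReal_self']
        have := (gibbs_aux F Fstar hF hFstarProb (hsubStar F hFP' hFQ')).1
        linarith
      · have : klDiv F Q = ⊤ := if_neg hFQ'
        rw [this, EReal.add_top_of_ne_bot (klDiv_ne_bot F P)]
        exact le_top
    · have : klDiv F P = ⊤ := if_neg hFP'
      rw [this, EReal.top_add_of_ne_bot (klDiv_ne_bot F Q)]
      exact le_top
  · intro F hF heq
    rw [hkP, hkQ, ← EReal.coe_add] at heq
    have hFP' : ∀ i, P i = 0 → F i = 0 := by
      by_contra hc
      rw [show klDiv F P = ⊤ from if_neg hc,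
        EReal.top_add_of_ne_bot (klDiv_ne_bot F Q)] at heq
      exact (EReal.coe_ne_top _) heq.symm
    have hFQ' : ∀ i, Q i = 0 → F i = 0 := by
      by_contra hc
      rw [show klDiv F Q = ⊤ from if_neg hc,
        EReal.add_top_of_ne_bot (klDiv_ne_bot F P)] at heq
      exact (EReal.coe_ne_top _) heq.symm
    rw [show klDiv F P = ((klDivReal F P : ℝ) : EReal) from if_pos hFP',
      show klDiv F Q = ((klDivReal F Q : ℝ) : EReal) from if_pos hFQ',
      ← EReal.coe_add, EReal.coe_eq_coe_iff] at heq
    rw [hkey F hF hFP' hFQ', hstarval, klDivReal_self'] at heq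
    have h0 : klDivReal F Fstar = 0 := by linarith
    exact (gibbs_aux F Fstar hF hFstarProb (hsubStar F hFP' hFQ')).2 h0
end

section
/- Let X₁,…,Xₙ be i.i.d. samples from a distribution P on [d], and let E be a set of probability distributions on [d]. Then the probability that the empirical distribution of the sample lies in E is at most (n+1)^d · 2^(-n·inf_{F∈E} D(F‖P)). (Sanov's theorem, finite-alphabet upper bound.) -/
open MeasureTheory Filter Finset
open scoped ENNReal

/-!
Method of types. If `Q` is the empirical distribution of a sample `x`, then
`Pⁿ(x) = ∏ᵢ P(i)^{nQ(i)} = Qⁿ(x) · 2^{-n D(Q‖P)}`, and `Pⁿ(x) = 0` when `Q` charges a point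
where `P` vanishes. Samples of the same type share the same `Q`, so their `Qⁿ`-masses add up
to at most one, and there are at most `(n+1)^d` types.
-/

lemma Fintype.prod_comp_eq_prod_pow_card {ι α M : Type*} [Fintype ι] [Fintype α]
    [DecidableEq α] [CommMonoid M] (f : α → M) (x : ι → α) :
    ∏ j, f (x j) = ∏ i, f i ^ #{j | x j = i} := by
  rw [← Finset.prod_fiberwise' univ x f]
  exact Finset.prod_congr rfl fun i _ => prod_const _

lemma pow_eq_pow_mul_exp_neg_klTerm {n c : ℕ} {p q : ℝ} (hq : (n : ℝ) * q = c)
    (hp : c ≠ 0 → 0 < p) :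
    p ^ c =
      q ^ c * Real.exp (-n * Real.log 2 * if q = 0 then 0 else q * Real.logb 2 (q / p)) := by
  rcases eq_or_ne c 0 with rfl | hc
  · have hexponent :
        -n * Real.log 2 * (if q = 0 then 0 else q * Real.logb 2 (q / p)) = 0 := by
      split_ifs
      · exact mul_zero _
      · linear_combination (-Real.log 2 * Real.logb 2 (q / p)) * hq
    rw [pow_zero, pow_zero, one_mul, hexponent, Real.exp_zero]
  have hq₀ : q ≠ 0 := by
    rintro rfl
    exact hc (by exact_mod_cast (mul_zero (n : ℝ) ▸ hq).symm)
  have hqpos : 0 < q :=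
    pos_of_mul_pos_right (hq ▸ Nat.cast_pos.2 (Nat.pos_of_ne_zero hc)) n.cast_nonneg
  have hexponent : -n * Real.log 2 * (q * Real.logb 2 (q / p)) = c * Real.log (p / q) := by
    rw [Real.logb, ← hq, ← inv_div q p, Real.log_inv]
    field_simp
  rw [if_neg hq₀, hexponent, Real.exp_nat_mul, Real.exp_log (div_pos (hp hc) hqpos), ← mul_pow,
    mul_div_cancel₀ _ hq₀]

section Types

variable {d n : ℕ}

lemma empDist_nonneg (x : Fin n → Fin d) (i : Fin d) : 0 ≤ empDist x i := by
  unfold empDist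
  positivity

lemma natCast_mul_empDist (x : Fin n → Fin d) (i : Fin d) :
    (n : ℝ) * empDist x i = #{j | x j = i} := by
  rcases n.eq_zero_or_pos with rfl | hn
  · simp
  · exact mul_div_cancel₀ _ (by positivity)

lemma sum_empDist_le_one (x : Fin n → Fin d) : ∑ i, empDist x i ≤ 1 := by
  have hcount : ∑ i, (#{j | x j = i} : ℝ) = n := by
    exact_mod_cast (card_eq_sum_card_fiberwise fun j _ => mem_univ (x j)).symm.trans
      (card_fin n)
  simp only [empDist, ← sum_div, hcount]
  exact div_self_le_one _

lemma exists_apply_eq_of_card_ne_zero {x : Fin n → Fin d} {i : Fin d}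
    (h : #{j | x j = i} ≠ 0) : ∃ j, x j = i := by
  obtain ⟨j, hj⟩ := card_ne_zero.1 h
  exact ⟨j, (mem_filter.1 hj).2⟩

lemma prod_eq_prod_empDist_mul_exp {P : Fin d → ℝ} {x : Fin n → Fin d}
    (hP : ∀ j, 0 < P (x j)) :
    ∏ j, P (x j) =
      (∏ j, empDist x (x j)) * Real.exp (-n * Real.log 2 * klDivReal (empDist x) P) := by
  rw [Fintype.prod_comp_eq_prod_pow_card P x, Fintype.prod_comp_eq_prod_pow_card (empDist x) x,
    klDivReal, mul_sum, Real.exp_sum, ← prod_mul_distrib]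
  refine prod_congr rfl fun i _ => pow_eq_pow_mul_exp_neg_klTerm (natCast_mul_empDist x i) ?_
  intro hc
  obtain ⟨j, rfl⟩ := exists_apply_eq_of_card_ne_zero hc
  exact hP j

lemma klDiv_empDist_eq_klDivReal {P : Fin d → ℝ} {x : Fin n → Fin d}
    (hP : ∀ j, 0 < P (x j)) : klDiv (empDist x) P = klDivReal (empDist x) P := by
  refine if_pos fun i hPi => ?_
  by_contra hQi
  have hc : #{j | x j = i} ≠ 0 := by
    intro hc
    exact hQi (by rw [empDist, hc, Nat.cast_zero, zero_div])
  obtain ⟨j, rfl⟩ := exists_apply_eq_of_card_ne_zero hc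
  exact (hP j).ne' hPi

lemma discMeasure_singleton (p : Fin d → ℝ) (i : Fin d) :
    discMeasure p {i} = ENNReal.ofReal (p i) := by
  rw [discMeasure, withDensity_apply _ (measurableSet_singleton i), lintegral_singleton,
    Measure.count_singleton, mul_one]

lemma iidMeasure_singleton (p : Fin d → ℝ) (x : Fin n → Fin d) :
    iidMeasure p n {x} = ∏ j, ENNReal.ofReal (p (x j)) := by
  rw [iidMeasure, ← Set.univ_pi_singleton x, Measure.pi_pi]
  exact prod_congr rfl fun j _ => discMeasure_singleton p (x j)

lemma iidMeasure_univ_le_one {q : Fin d → ℝ} (hq₀ : ∀ i, 0 ≤ q i) (hq : ∑ i, q i ≤ 1) :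
    iidMeasure q n Set.univ ≤ 1 := by
  have hdisc : discMeasure q Set.univ ≤ 1 := by
    rw [← coe_univ, ← sum_measure_singleton]
    simp only [discMeasure_singleton]
    rw [← ENNReal.ofReal_sum_of_nonneg fun i _ => hq₀ i]
    exact ENNReal.ofReal_le_one.2 hq
  rw [iidMeasure, ← Set.pi_univ, Measure.pi_pi, prod_const]
  exact pow_le_one₀ zero_le hdisc

def typeCount (x : Fin n → Fin d) (i : Fin d) : Fin (n + 1) :=
  ⟨#{j | x j = i}, Nat.lt_succ_of_le ((card_le_univ _).trans_eq (Fintype.card_fin n))⟩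

lemma empDist_eq_of_typeCount_eq {x y : Fin n → Fin d} (h : typeCount x = typeCount y) :
    empDist x = empDist y := by
  funext i
  have hcount : #{j | x j = i} = #{j | y j = i} := congrArg Fin.val (congrFun h i)
  rw [empDist, empDist, hcount]

lemma sum_typeClass_le_one (t : Fin d → Fin (n + 1)) :
    ∑ x with typeCount x = t, iidMeasure (empDist x) n {x} ≤ 1 := by
  rcases (univ.filter fun x => typeCount x = t).eq_empty_or_nonempty with h | ⟨x₀, hx₀⟩
  · simp [h]
  calc ∑ x with typeCount x = t, iidMeasure (empDist x) n {x}
      = ∑ x with typeCount x = t, iidMeasure (empDist x₀) n {x} := by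
        refine sum_congr rfl fun x hx => ?_
        rw [empDist_eq_of_typeCount_eq ((mem_filter.1 hx).2.trans (mem_filter.1 hx₀).2.symm)]
    _ ≤ iidMeasure (empDist x₀) n Set.univ := by
        rw [sum_measure_singleton]
        exact measure_mono (Set.subset_univ _)
    _ ≤ 1 := iidMeasure_univ_le_one (empDist_nonneg x₀) (sum_empDist_le_one x₀)

lemma sum_iidMeasure_empDist_singleton_le :
    ∑ x : Fin n → Fin d, iidMeasure (empDist x) n {x} ≤ (n + 1) ^ d := by
  rw [← sum_fiberwise univ typeCount]
  calc ∑ t, ∑ x with typeCount x = t, iidMeasure (empDist x) n {x}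
      ≤ ∑ _t : Fin d → Fin (n + 1), (1 : ℝ≥0∞) := sum_le_sum fun t _ => sum_typeClass_le_one t
    _ = (n + 1) ^ d := by simp

lemma iidMeasure_singleton_le (P : Fin d → ℝ) (x : Fin n → Fin d) :
    iidMeasure P n {x} ≤
      iidMeasure (empDist x) n {x} *
        EReal.exp (((-(n : ℝ) * Real.log 2 : ℝ) : EReal) * klDiv (empDist x) P) := by
  rw [iidMeasure_singleton, iidMeasure_singleton]
  by_cases hP : ∀ j, 0 < P (x j)
  · refine le_of_eq ?_
    rw [klDiv_empDist_eq_klDivReal hP, ← EReal.coe_mul, EReal.exp_coe,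
      ← ENNReal.ofReal_prod_of_nonneg fun j _ => (hP j).le,
      ← ENNReal.ofReal_prod_of_nonneg fun j _ => empDist_nonneg x (x j),
      ← ENNReal.ofReal_mul (prod_nonneg fun j _ => empDist_nonneg x (x j)),
      prod_eq_prod_empDist_mul_exp hP]
  · push Not at hP
    obtain ⟨j, hj⟩ := hP
    rw [prod_eq_zero (mem_univ j) (ENNReal.ofReal_eq_zero.2 hj)]
    exact zero_le

end Types

theorem sanov_upper_bound_general {d : ℕ} (P : Fin d → ℝ)
    (E : Set (Fin d → ℝ)) (n : ℕ) :
    iidMeasure P n {x | empDist x ∈ E} ≤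
      ((n + 1 : ℝ≥0∞)) ^ d *
        EReal.exp ((((-(n : ℝ)) * Real.log 2 : ℝ) : EReal) * ⨅ F ∈ E, klDiv F P) := by
  classical
  set k : EReal := ((-(n : ℝ) * Real.log 2 : ℝ) : EReal)
  set I : EReal := ⨅ F ∈ E, klDiv F P
  have hk : k ≤ 0 :=
    EReal.coe_nonpos.2 (mul_nonpos_of_nonpos_of_nonneg (neg_nonpos.2 n.cast_nonneg)
      (Real.log_nonneg one_le_two))
  have hexp : ∀ x : Fin n → Fin d, empDist x ∈ E →
      EReal.exp (k * klDiv (empDist x) P) ≤ EReal.exp (k * I) := by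
    intro x hx
    refine EReal.exp_monotone ?_
    rw [mul_comm k, mul_comm k]
    exact EReal.mul_le_mul_of_nonpos_right (iInf₂_le _ hx) hk
  calc iidMeasure P n {x | empDist x ∈ E}
      = ∑ x with empDist x ∈ E, iidMeasure P n {x} := by
        rw [sum_measure_singleton, coe_filter_univ]
    _ ≤ ∑ x with empDist x ∈ E, iidMeasure (empDist x) n {x} * EReal.exp (k * I) :=
        sum_le_sum fun x hx =>
          (iidMeasure_singleton_le P x).trans (mul_le_mul_right (hexp x (mem_filter.1 hx).2) _)
    _ = (∑ x with empDist x ∈ E, iidMeasure (empDist x) n {x}) * EReal.exp (k * I) :=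
        (sum_mul _ _ _).symm
    _ ≤ (n + 1) ^ d * EReal.exp (k * I) := by
        gcongr
        exact (sum_le_sum_of_subset (subset_univ _)).trans sum_iidMeasure_empDist_singleton_le

/-- Sanov's theorem, finite-alphabet upper bound:
`Pr[P̂ₙ ∈ E] ≤ (n+1)^d · 2^(-n · inf_{F ∈ E} D(F‖P))`.
(Here `2^y = EReal.exp (y ln 2)` encodes the base-2 exponential.) -/
theorem sanov_upper_bound {d : ℕ} (P : Fin d → ℝ) (hP : IsProbDist P)
    (E : Set (Fin d → ℝ)) (hE : ∀ F ∈ E, IsProbDist F) (n : ℕ) :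
    iidMeasure P n {x | empDist x ∈ E} ≤
      ((n + 1 : ℝ≥0∞)) ^ d *
        EReal.exp ((((-(n : ℝ)) * Real.log 2 : ℝ) : EReal) * ⨅ F ∈ E, klDiv F P) :=
  sanov_upper_bound_general P E n
end

section
/- Let P, Q be distributions on [d] and let F* minimize F ↦ D(F‖P) + D(F‖Q). For any η > 0, if two distributions A, B on [d] satisfy ‖A - B‖₁ ≤ η and supp(A), supp(B) ⊆ supp(P) ∩ supp(Q), then D(A‖P) + D(B‖Q) ≥ D(F*‖P) + D(F*‖Q) - g(P, η), where g(P, η) = 2·log₂(1/p_min)·η + (2√2/ln 2)·√η. -/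
open MeasureTheory Filter Finset
open scoped ENNReal

section TwoSampleHelpers

lemma neg_mul_log_nonneg {t : ℝ} (h0 : 0 ≤ t) (h1 : t ≤ 1) : 0 ≤ -(t * Real.log t) := by
  rcases eq_or_lt_of_le h0 with rfl | hpos
  · simp
  · have : Real.log t ≤ 0 := Real.log_nonpos h0 h1
    nlinarith

/-- Subadditivity-type bound. -/
lemma neg_mul_log_subadd {x y : ℝ} (hy0 : 0 ≤ y) (hyx : y ≤ x) :
    -(x * Real.log x) ≤ -(y * Real.log y) + -((x - y) * Real.log (x - y)) := by
  rcases eq_or_lt_of_le hyx with rfl | hlt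
  · simp
  have htpos : 0 < x - y := sub_pos.mpr hlt
  have hxpos : 0 < x := lt_of_le_of_lt hy0 hlt
  have h1 : -(y * Real.log x) ≤ -(y * Real.log y) := by
    rcases eq_or_lt_of_le hy0 with rfl | hy
    · simp
    · have := Real.log_le_log hy hyx
      nlinarith
  have h2 : -((x - y) * Real.log x) ≤ -((x - y) * Real.log (x - y)) := by
    have : Real.log (x - y) ≤ Real.log x := Real.log_le_log htpos (by linarith)
    nlinarith
  nlinarith [h1, h2]

/-- Lipschitz-below: for `0 ≤ y ≤ x ≤ 1`, `-y log y ≤ -x log x + (x - y)`. -/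
lemma neg_mul_log_lip {x y : ℝ} (hy0 : 0 ≤ y) (hyx : y ≤ x) (hx1 : x ≤ 1) :
    -(y * Real.log y) ≤ -(x * Real.log x) + (x - y) := by
  rcases eq_or_lt_of_le hy0 with rfl | hy
  · simp
    have := neg_mul_log_nonneg (le_trans (le_refl 0) hyx) hx1
    nlinarith [neg_mul_log_nonneg (hy0.trans hyx) hx1]
  have hx : 0 < x := lt_of_lt_of_le hy hyx
  -- -y log y + x log x = y log(x/y) + (x-y) log x ≤ y (x/y - 1) + 0 = x - y
  have hlog : Real.log (x / y) ≤ x / y - 1 := Real.log_le_sub_one_of_pos (by positivity)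
  have hdiv : Real.log (x / y) = Real.log x - Real.log y := Real.log_div hx.ne' hy.ne'
  have h2 : (x - y) * Real.log x ≤ 0 :=
    mul_nonpos_of_nonneg_of_nonpos (by linarith) (Real.log_nonpos hx.le hx1)
  have h3 : y * Real.log (x / y) ≤ y * (x / y - 1) := by nlinarith
  have h4 : y * (x / y - 1) = x - y := by field_simp
  nlinarith [h3]

/-- pointwise entropy-difference bound. -/
lemma mul_log_sub_le {x y : ℝ} (hx0 : 0 ≤ x) (hx1 : x ≤ 1) (hy0 : 0 ≤ y) (hy1 : y ≤ 1) :
    x * Real.log x - y * Real.log y ≤ |x - y| + -(|x - y| * Real.log |x - y|) := by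
  rcases le_total y x with h | h
  · -- f y - f x ≤ x - y ≤ δ + f δ ; here goal LHS = f y - f x with f t = -(t log t)
    have := neg_mul_log_lip hy0 h hx1
    have habs : |x - y| = x - y := abs_of_nonneg (by linarith)
    rw [habs]
    have := neg_mul_log_nonneg (t := x - y) (by linarith) (by linarith)
    nlinarith
  · have := neg_mul_log_subadd hx0 h
    have habs : |x - y| = y - x := by rw [abs_of_nonpos (by linarith : x - y ≤ 0)]; ring
    rw [habs]
    nlinarith

lemma calc_key {t : ℝ} (h0 : 0 < t) (h2 : t ≤ 2) :
    2 * t + t * max (-Real.log t) 0 ≤ 2 * Real.sqrt 2 * Real.sqrt t := by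
  have hst : Real.sqrt t * Real.sqrt t = t := Real.mul_self_sqrt h0.le
  have hs0 : 0 < Real.sqrt t := Real.sqrt_pos.mpr h0
  rcases le_or_gt 1 t with h1 | h1
  · have : max (-Real.log t) 0 = 0 := max_eq_right (by nlinarith [Real.log_nonneg h1])
    rw [this]
    have hsq : Real.sqrt t ≤ Real.sqrt 2 := Real.sqrt_le_sqrt h2
    nlinarith [Real.sqrt_nonneg 2]
  · have hlt : Real.log t < 0 := Real.log_neg h0 h1
    rw [max_eq_left (by linarith)]
    set s := Real.sqrt t with hs
    have hlog : Real.log t = 2 * Real.log s := by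
      rw [hs, Real.log_sqrt h0.le]; ring
    -- -s log s ≤ 1 - s
    have key : -(s * Real.log s) ≤ 1 - s := by
      have h := Real.log_le_sub_one_of_pos (x := 1/s) (by positivity)
      have : Real.log (1/s) = -Real.log s := by
        rw [one_div, Real.log_inv]
      rw [this] at h
      have := mul_le_mul_of_nonneg_left h hs0.le
      have hinv : s * (1/s - 1) = 1 - s := by field_simp
      nlinarith
    have h1s : 1 ≤ Real.sqrt 2 := by
      rw [show (1:ℝ) = Real.sqrt 1 by simp]
      exact Real.sqrt_le_sqrt (by norm_num)
    -- goal: 2 t + t * (- log t) ≤ 2 √2 s, t = s^2, log t = 2 log s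
    -- 2 s^2 + s^2 * (-2 log s) = 2 s (s + (- s log s)) ≤ 2 s (s + 1 - s) = 2 s ≤ 2 √2 s
    nlinarith [key, hs0, h1s]

lemma klDivReal_eq {d : ℕ} (p q : Fin d → ℝ) (h : ∀ i, q i = 0 → p i = 0) :
    klDivReal p q = (∑ i, (p i * Real.log (p i) - p i * Real.log (q i))) / Real.log 2 := by
  rw [klDivReal, Finset.sum_div]
  refine Finset.sum_congr rfl fun i _ => ?_
  rcases eq_or_ne (p i) 0 with hp | hp
  · simp [hp]
  · have hq : q i ≠ 0 := fun hq => hp (h i hq)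
    rw [if_neg hp, Real.logb, Real.log_div hp hq]
    ring

lemma probDist_le_one {d : ℕ} (F : Fin d → ℝ) (hF : IsProbDist F) (i : Fin d) : F i ≤ 1 := by
  have := Finset.single_le_sum (f := F) (fun j _ => hF.1 j) (Finset.mem_univ i)
  rw [hF.2] at this; exact this

lemma minPos_pos_le_one {d : ℕ} (P : Fin d → ℝ) (hP : IsProbDist P) :
    0 < minPos P ∧ minPos P ≤ 1 := by
  classical
  set T : Finset (Fin d) := Finset.univ.filter fun i => 0 < P i with hT
  have hTne : T.Nonempty := by
    by_contra h
    rw [Finset.not_nonempty_iff_eq_empty] at h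
    have hz : ∀ i, P i = 0 := by
      intro i
      by_contra hi
      have : i ∈ T := by
        simp [hT, lt_of_le_of_ne (hP.1 i) (Ne.symm hi)]
      simp [h] at this
    have := hP.2
    simp [hz] at this
  have hpm_def : minPos P = T.inf' hTne P := by rw [minPos, dif_pos hTne]
  obtain ⟨i₀, hi₀T, hi₀⟩ := Finset.exists_mem_eq_inf' hTne P
  constructor
  · rw [hpm_def, hi₀]; exact (Finset.mem_filter.mp hi₀T).2
  · rw [hpm_def, hi₀]; exact probDist_le_one P hP i₀

lemma gCont_mono {d : ℕ} (P : Fin d → ℝ) (hP : IsProbDist P) {a b : ℝ}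
    (ha : 0 ≤ a) (hab : a ≤ b) : gCont P a ≤ gCont P b := by
  obtain ⟨h1, h2⟩ := minPos_pos_le_one P hP
  have hlb : 0 ≤ Real.logb 2 (1 / minPos P) :=
    Real.logb_nonneg (by norm_num) (one_le_one_div h1 h2)
  have hsq : Real.sqrt a ≤ Real.sqrt b := Real.sqrt_le_sqrt hab
  have hc : 0 ≤ 2 * Real.sqrt 2 / Real.log 2 := by positivity
  rw [gCont, gCont]
  nlinarith [mul_le_mul_of_nonneg_left hab hlb, mul_le_mul_of_nonneg_left hsq hc]

lemma kl_continuity_core {d : ℕ} (P A B : Fin d → ℝ) (η : ℝ)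
    (hP : IsProbDist P) (hA : IsProbDist A) (hB : IsProbDist B)
    (hη : 0 < η) (hη2 : η ≤ 2) (hl1 : l1Dist A B ≤ η)
    (hAs : ∀ i, P i = 0 → A i = 0) (hBs : ∀ i, P i = 0 → B i = 0) :
    klDivReal B P ≤ klDivReal A P + gCont P η := by
  classical
  set T : Finset (Fin d) := Finset.univ.filter fun i => 0 < P i with hT
  have hTne : T.Nonempty := by
    by_contra h
    rw [Finset.not_nonempty_iff_eq_empty] at h
    have hz : ∀ i, P i = 0 := by
      intro i
      by_contra hi
      have : i ∈ T := by
        simp [hT, lt_of_le_of_ne (hP.1 i) (Ne.symm hi)]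
      simp [h] at this
    have := hP.2
    simp [hz] at this
  have hpm_def : minPos P = T.inf' hTne P := by rw [minPos, dif_pos hTne]
  obtain ⟨i₀, hi₀T, hi₀⟩ := Finset.exists_mem_eq_inf' hTne P
  have hpmin_pos : 0 < minPos P := by
    rw [hpm_def, hi₀]; exact (Finset.mem_filter.mp hi₀T).2
  have hP_le_one : ∀ i, P i ≤ 1 := by
    intro i
    have := Finset.single_le_sum (f := P) (fun j _ => hP.1 j) (Finset.mem_univ i)
    rw [hP.2] at this; exact this
  have hpmin_le_one : minPos P ≤ 1 := by
    rw [hpm_def, hi₀]; exact hP_le_one i₀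
  have hpm_le : ∀ i, P i ≠ 0 → minPos P ≤ P i := by
    intro i hi
    rw [hpm_def]
    exact Finset.inf'_le _ (by simp [hT, lt_of_le_of_ne (hP.1 i) (Ne.symm hi)])
  set L := -Real.log (minPos P) with hL
  have hL0 : 0 ≤ L := neg_nonneg.mpr (Real.log_nonpos hpmin_pos.le hpmin_le_one)
  set k := T.card with hk
  have hk_pos : 0 < k := Finset.card_pos.mpr hTne
  have hkR : (0:ℝ) < k := by exact_mod_cast hk_pos
  have hkp : (k:ℝ) * minPos P ≤ 1 := by
    have h1 : (k:ℝ) * minPos P ≤ ∑ i ∈ T, P i := by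
      have := Finset.card_nsmul_le_sum T P (minPos P)
        (fun i hi => hpm_le i (ne_of_gt (Finset.mem_filter.mp hi).2))
      rwa [nsmul_eq_mul] at this
    have h2 : ∑ i ∈ T, P i ≤ ∑ i, P i :=
      Finset.sum_le_sum_of_subset_of_nonneg (Finset.subset_univ T)
        (fun i _ _ => hP.1 i)
    rw [hP.2] at h2; linarith
  have hlogk : Real.log k ≤ L := by
    have hkle : (k:ℝ) ≤ 1 / minPos P := (le_div_iff₀ hpmin_pos).mpr hkp
    calc Real.log k ≤ Real.log (1 / minPos P) := Real.log_le_log hkR hkle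
    _ = L := by rw [one_div, Real.log_inv]
  set δ : Fin d → ℝ := fun i => |A i - B i| with hδ
  have hδ0 : ∀ i, 0 ≤ δ i := fun i => abs_nonneg _
  have hS : ∑ i, δ i ≤ η := hl1
  have hSnn : 0 ≤ ∑ i, δ i := Finset.sum_nonneg fun i _ => hδ0 i
  set M := max (-Real.log η) 0 with hM
  have hM0 : 0 ≤ M := le_max_right _ _
  have hin01 : ∀ (F : Fin d → ℝ), IsProbDist F → ∀ i, F i ≤ 1 := by
    intro F hF i
    have := Finset.single_le_sum (f := F) (fun j _ => hF.1 j) (Finset.mem_univ i)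
    rw [hF.2] at this; exact this
  -- entropy modulus sum bound
  have hf : ∑ i, -(δ i * Real.log (δ i)) ≤ η + η * (L + M) := by
    have hoff : ∀ i ∈ Finset.univ, i ∉ T → -(δ i * Real.log (δ i)) = 0 := by
      intro i _ hi
      have hPi : P i = 0 := by
        by_contra hne
        exact hi (by simp [hT, lt_of_le_of_ne (hP.1 i) (Ne.symm hne)])
      have : δ i = 0 := by simp [hδ, hAs i hPi, hBs i hPi]
      simp [this]
    rw [← Finset.sum_subset (Finset.subset_univ T) hoff]
    have hpt : ∀ i ∈ T, -(δ i * Real.log (δ i)) ≤ η / k + δ i * (Real.log k + M) := by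
      intro i _
      rcases eq_or_lt_of_le (hδ0 i) with h0 | h0
      · rw [← h0]; simp; positivity
      · have harg : 0 < η / ((k:ℝ) * δ i) := by positivity
        have hlog := Real.log_le_sub_one_of_pos harg
        have hexp : Real.log (η / ((k:ℝ) * δ i)) =
            Real.log η - Real.log k - Real.log (δ i) := by
          rw [Real.log_div (ne_of_gt hη) (by positivity), Real.log_mul (ne_of_gt hkR) (ne_of_gt h0)]
          ring
        have hMδ : -(δ i * Real.log η) ≤ δ i * M := by
          have : -Real.log η ≤ M := le_max_left _ _
          nlinarith
        have hfld : δ i * (η / ((k:ℝ) * δ i)) = η / k := by field_simp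
        nlinarith [mul_le_mul_of_nonneg_left hlog (hδ0 i)]
    calc ∑ i ∈ T, -(δ i * Real.log (δ i))
        ≤ ∑ i ∈ T, (η / k + δ i * (Real.log k + M)) := Finset.sum_le_sum hpt
      _ = (k:ℝ) * (η / k) + (∑ i ∈ T, δ i) * (Real.log k + M) := by
          rw [Finset.sum_add_distrib, Finset.sum_const, ← Finset.sum_mul, nsmul_eq_mul]
      _ ≤ η + η * (L + M) := by
          have h1 : (k:ℝ) * (η / k) = η := by field_simp
          have h2 : ∑ i ∈ T, δ i ≤ η := le_trans
            (Finset.sum_le_sum_of_subset_of_nonneg (Finset.subset_univ T)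
              (fun i _ _ => hδ0 i)) hS
          have h3 : 0 ≤ ∑ i ∈ T, δ i := Finset.sum_nonneg fun i _ => hδ0 i
          have h4 : 0 ≤ Real.log k + M := by
            have : 0 ≤ Real.log k := Real.log_nonneg (by exact_mod_cast hk_pos)
            linarith
          nlinarith [hlogk]
  -- S1 bound
  have hS1 : ∑ i, (B i * Real.log (B i) - A i * Real.log (A i)) ≤ 2 * η + η * (L + M) := by
    have hpt : ∀ i ∈ Finset.univ, B i * Real.log (B i) - A i * Real.log (A i) ≤
        δ i + -(δ i * Real.log (δ i)) := by
      intro i _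
      have := mul_log_sub_le (hB.1 i) (hin01 B hB i) (hA.1 i) (hin01 A hA i)
      simpa [hδ, abs_sub_comm (B i) (A i)] using this
    calc ∑ i, (B i * Real.log (B i) - A i * Real.log (A i))
        ≤ ∑ i, (δ i + -(δ i * Real.log (δ i))) := Finset.sum_le_sum hpt
      _ = (∑ i, δ i) + ∑ i, -(δ i * Real.log (δ i)) := Finset.sum_add_distrib
      _ ≤ 2 * η + η * (L + M) := by linarith
  -- S2 bound
  have hS2 : ∑ i, (A i - B i) * Real.log (P i) ≤ L * η := by
    have hpt : ∀ i ∈ Finset.univ, (A i - B i) * Real.log (P i) ≤ δ i * L := by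
      intro i _
      rcases eq_or_ne (A i) (B i) with he | hne
      · simp [hδ, he]
      · have hPi : P i ≠ 0 := by
          intro h0
          exact hne (by rw [hAs i h0, hBs i h0])
        have hPpos : 0 < P i := lt_of_le_of_ne (hP.1 i) (Ne.symm hPi)
        have hlogP : |Real.log (P i)| ≤ L := by
          rw [abs_of_nonpos (Real.log_nonpos hPpos.le (hP_le_one i))]
          have := Real.log_le_log hpmin_pos (hpm_le i hPi)
          linarith
        calc (A i - B i) * Real.log (P i) ≤ |(A i - B i) * Real.log (P i)| := le_abs_self _
          _ = δ i * |Real.log (P i)| := by rw [abs_mul]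
          _ ≤ δ i * L := mul_le_mul_of_nonneg_left hlogP (hδ0 i)
    calc ∑ i, (A i - B i) * Real.log (P i) ≤ ∑ i, δ i * L :=
          Finset.sum_le_sum hpt
      _ = (∑ i, δ i) * L := by rw [Finset.sum_mul]
      _ ≤ L * η := by nlinarith
  -- combine
  have hlog2 : 0 < Real.log 2 := Real.log_pos (by norm_num)
  have hg : gCont P η = (2 * L * η + 2 * Real.sqrt 2 * Real.sqrt η) / Real.log 2 := by
    rw [gCont, Real.logb, one_div, Real.log_inv]
    field_simp
    ring
  rw [klDivReal_eq B P hBs, klDivReal_eq A P hAs, hg, ← add_div,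
    div_le_div_iff_of_pos_right hlog2]
  have hnum : ∑ i, (B i * Real.log (B i) - B i * Real.log (P i))
      - ∑ i, (A i * Real.log (A i) - A i * Real.log (P i))
      = ∑ i, (B i * Real.log (B i) - A i * Real.log (A i))
        + ∑ i, (A i - B i) * Real.log (P i) := by
    rw [← Finset.sum_sub_distrib, ← Finset.sum_add_distrib]
    exact Finset.sum_congr rfl fun i _ => by ring
  have hck := calc_key hη hη2
  have : ∑ i, (B i * Real.log (B i) - A i * Real.log (A i))
        + ∑ i, (A i - B i) * Real.log (P i) ≤ 2 * L * η + 2 * Real.sqrt 2 * Real.sqrt η := by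
    have hexp2 : η * (L + M) = η * L + η * M := by ring
    linarith [hS1, hS2, hck]
  linarith [hnum, this]

end TwoSampleHelpers

/-- if `A` and `B` are `η`-close in ℓ¹ and supported in
`supp P ∩ supp Q`, then `D(A‖P) + D(B‖Q)` is within `g(P, η)` of the minimum
of `F ↦ D(F‖P) + D(F‖Q)`. -/

theorem two_sample_typeII_key_step {d : ℕ} (P Q Fstar A B : Fin d → ℝ) (η : ℝ)
    (hP : IsProbDist P) (hQ : IsProbDist Q)
    (hFstar : IsProbDist Fstar)
    (hmin : ∀ F : Fin d → ℝ, IsProbDist F →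
      klDiv Fstar P + klDiv Fstar Q ≤ klDiv F P + klDiv F Q)
    (hA : IsProbDist A) (hB : IsProbDist B)
    (hη : 0 < η) (hl1 : l1Dist A B ≤ η)
    (hAsupp : ∀ i, P i = 0 ∨ Q i = 0 → A i = 0)
    (hBsupp : ∀ i, P i = 0 ∨ Q i = 0 → B i = 0) :
    klDiv Fstar P + klDiv Fstar Q - ((gCont P η : ℝ) : EReal) ≤
      klDiv A P + klDiv B Q := by
  classical
  have hAP : ∀ i, P i = 0 → A i = 0 := fun i h => hAsupp i (Or.inl h)
  have hBP : ∀ i, P i = 0 → B i = 0 := fun i h => hBsupp i (Or.inl h)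
  have hBQ : ∀ i, Q i = 0 → B i = 0 := fun i h => hBsupp i (Or.inr h)
  have hl1_2 : l1Dist A B ≤ 2 := by
    have hpt : ∀ i ∈ Finset.univ, |A i - B i| ≤ A i + B i := by
      intro i _
      calc |A i - B i| ≤ |A i| + |B i| := abs_sub _ _
        _ = A i + B i := by rw [abs_of_nonneg (hA.1 i), abs_of_nonneg (hB.1 i)]
    calc l1Dist A B ≤ ∑ i, (A i + B i) := Finset.sum_le_sum hpt
      _ = 2 := by rw [Finset.sum_add_distrib, hA.2, hB.2]; norm_num
  have hη' : 0 < min η 2 := lt_min hη two_pos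
  have hcore := kl_continuity_core P A B (min η 2) hP hA hB hη' (min_le_right _ _)
    (le_min hl1 hl1_2) hAP hBP
  have hgm : gCont P (min η 2) ≤ gCont P η := gCont_mono P hP hη'.le (min_le_left _ _)
  have key : klDivReal B P + klDivReal B Q - gCont P η ≤ klDivReal A P + klDivReal B Q := by
    linarith
  have hmB := hmin B hB
  have e1 : klDiv B P = ((klDivReal B P : ℝ) : EReal) := by rw [klDiv, if_pos hBP]
  have e2 : klDiv B Q = ((klDivReal B Q : ℝ) : EReal) := by rw [klDiv, if_pos hBQ]
  have e3 : klDiv A P = ((klDivReal A P : ℝ) : EReal) := by rw [klDiv, if_pos hAP]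
  rw [e1, e2] at hmB
  rw [e3, e2]
  calc klDiv Fstar P + klDiv Fstar Q - ((gCont P η : ℝ) : EReal)
      ≤ ((klDivReal B P : ℝ) : EReal) + ((klDivReal B Q : ℝ) : EReal)
        - ((gCont P η : ℝ) : EReal) := EReal.sub_le_sub hmB le_rfl
    _ = (((klDivReal B P + klDivReal B Q - gCont P η : ℝ)) : EReal) := by
        rw [EReal.coe_sub, EReal.coe_add]
    _ ≤ (((klDivReal A P + klDivReal B Q : ℝ)) : EReal) := EReal.coe_le_coe_iff.mpr key
    _ = _ := by rw [EReal.coe_add]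
end
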